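/- In type D_4, where the simple roots are α_1 = 2ω_1 − ω_2, α_2 = −ω_1 + 2ω_2 − ω_3 − ω_4, α_3 = −ω_2 + 2ω_3, and α_4 = −ω_2 + 2ω_4, the level sets satisfy: Λ₁ = {0, ω_1, ω_3, ω_4} and Λ₂ = {ω_2, ω_1 + ω_3, ω_1 + ω_4, ω_3 + ω_4}. -/

import Mathlib

namespace WeightLevelsD4

/-- The simple roots of `D₄` in the basis of fundamental dominant weights:
`α₁ = 2ω₁ - ω₂`, `α₂ = -ω₁ + 2ω₂ - ω₃ - ω₄`, `α₃ = -ω₂ + 2ω₃`, `α₄ = -ω₂ + 2ω₄`. -/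
def alpha : Fin 4 → Fin 4 → ℤ :=
  ![![2, -1, 0, 0], ![-1, 2, -1, -1], ![0, -1, 2, 0], ![0, -1, 0, 2]]

/-- A weight is dominant if all its coordinates (in the fundamental weight basis) are `≥ 0`. -/
def dominant (l : Fin 4 → ℤ) : Prop := ∀ i, 0 ≤ l i

/-- `prec μ λ` means `μ ≺ λ`: `μ ≠ λ` and `λ - μ` is an `ℕ`-linear combination of the
simple roots. -/
def prec (μ l : Fin 4 → ℤ) : Prop :=
  μ ≠ l ∧ ∃ c : Fin 4 → ℕ, l = μ + ∑ i, (c i : ℤ) • alpha i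

/-- `cum i` is the union `Λ₁ ∪ ⋯ ∪ Λ_i` of the first `i` level sets. -/
def cum : ℕ → Set (Fin 4 → ℤ)
  | 0 => ∅
  | i + 1 => cum i ∪
      {l | dominant l ∧ l ∉ cum i ∧ ∀ ν, dominant ν → prec ν l → ν ∈ cum i}

/-- `level i` is the set `Λ_i` of weights of level `i` (for `i ≥ 1`). -/
def level (i : ℕ) : Set (Fin 4 → ℤ) :=
  {l | dominant l ∧ l ∉ cum (i - 1) ∧ ∀ ν, dominant ν → prec ν l → ν ∈ cum (i - 1)}

lemma eq4 {f g : Fin 4 → ℤ} : f = g ↔ f 0 = g 0 ∧ f 1 = g 1 ∧ f 2 = g 2 ∧ f 3 = g 3 := by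
  constructor
  · rintro rfl; exact ⟨rfl, rfl, rfl, rfl⟩
  · rintro ⟨h0, h1, h2, h3⟩; funext i; fin_cases i <;> assumption

lemma vec_val (a b c d : ℤ) :
    (![a, b, c, d] : Fin 4 → ℤ) 0 = a ∧ (![a, b, c, d] : Fin 4 → ℤ) 1 = b ∧
    (![a, b, c, d] : Fin 4 → ℤ) 2 = c ∧ (![a, b, c, d] : Fin 4 → ℤ) 3 = d :=
  ⟨rfl, rfl, rfl, rfl⟩

lemma prec_iff {μ l : Fin 4 → ℤ} : prec μ l ↔ μ ≠ l ∧ ∃ c : Fin 4 → ℕ,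
    l 0 = μ 0 + (2 * (c 0 : ℤ) - c 1) ∧
    l 1 = μ 1 + (- (c 0 : ℤ) + 2 * c 1 - c 2 - c 3) ∧
    l 2 = μ 2 + (- (c 1 : ℤ) + 2 * c 2) ∧
    l 3 = μ 3 + (- (c 1 : ℤ) + 2 * c 3) := by
  unfold prec
  refine and_congr_right fun _ => exists_congr fun c => ?_
  rw [eq4]
  simp [Fin.sum_univ_four, alpha]
  constructor
  · rintro ⟨h0, h1, h2, h3⟩; refine ⟨by omega, by omega, by omega, by omega⟩
  · rintro ⟨h0, h1, h2, h3⟩; refine ⟨by omega, by omega, by omega, by omega⟩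

/-- Fully numeric constructor for `prec ![a,b,c,d] l`. -/
lemma prec_mk' (l : Fin 4 → ℤ) (a b c d : ℤ) (c0 c1 c2 c3 : ℕ)
    (hne : ¬(a = l 0 ∧ b = l 1 ∧ c = l 2 ∧ d = l 3))
    (h0 : l 0 = a + (2 * (c0 : ℤ) - c1))
    (h1 : l 1 = b + (- (c0 : ℤ) + 2 * c1 - c2 - c3))
    (h2 : l 2 = c + (- (c1 : ℤ) + 2 * c2))
    (h3 : l 3 = d + (- (c1 : ℤ) + 2 * c3)) : prec ![a, b, c, d] l := by
  rw [prec_iff]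
  obtain ⟨e0, e1, e2, e3⟩ := vec_val a b c d
  refine ⟨fun h => ?_, ![c0, c1, c2, c3], ?_, ?_, ?_, ?_⟩
  · rw [eq4, e0, e1, e2, e3] at h; exact hne h
  · rw [e0]; exact_mod_cast h0
  · rw [e1]; exact_mod_cast h1
  · rw [e2]; exact_mod_cast h2
  · rw [e3]; exact_mod_cast h3

lemma dominant_mk {a b c d : ℤ} (ha : 0 ≤ a) (hb : 0 ≤ b) (hc : 0 ≤ c) (hd : 0 ≤ d) :
    dominant ![a, b, c, d] := by
  intro i
  obtain ⟨e0, e1, e2, e3⟩ := vec_val a b c d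
  fin_cases i
  exacts [le_of_le_of_eq ha e0.symm, le_of_le_of_eq hb e1.symm,
    le_of_le_of_eq hc e2.symm, le_of_le_of_eq hd e3.symm]

def S1 : Set (Fin 4 → ℤ) := {0, ![1, 0, 0, 0], ![0, 0, 1, 0], ![0, 0, 0, 1]}
def S2 : Set (Fin 4 → ℤ) := {![0, 1, 0, 0], ![1, 0, 1, 0], ![1, 0, 0, 1], ![0, 0, 1, 1]}

lemma mem_S1_iff {l : Fin 4 → ℤ} : l ∈ S1 ↔
    (l 0 = 0 ∧ l 1 = 0 ∧ l 2 = 0 ∧ l 3 = 0) ∨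
    (l 0 = 1 ∧ l 1 = 0 ∧ l 2 = 0 ∧ l 3 = 0) ∨
    (l 0 = 0 ∧ l 1 = 0 ∧ l 2 = 1 ∧ l 3 = 0) ∨
    (l 0 = 0 ∧ l 1 = 0 ∧ l 2 = 0 ∧ l 3 = 1) := by
  simp only [S1, Set.mem_insert_iff, Set.mem_singleton_iff, eq4]
  norm_num
  exact Iff.rfl

lemma mem_S2_iff {l : Fin 4 → ℤ} : l ∈ S2 ↔
    (l 0 = 0 ∧ l 1 = 1 ∧ l 2 = 0 ∧ l 3 = 0) ∨
    (l 0 = 1 ∧ l 1 = 0 ∧ l 2 = 1 ∧ l 3 = 0) ∨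
    (l 0 = 1 ∧ l 1 = 0 ∧ l 2 = 0 ∧ l 3 = 1) ∨
    (l 0 = 0 ∧ l 1 = 0 ∧ l 2 = 1 ∧ l 3 = 1) := by
  simp only [S2, Set.mem_insert_iff, Set.mem_singleton_iff, eq4]
  norm_num
  exact Iff.rfl

lemma not_mem_S1 {a b c d : ℤ}
    (h : ¬((a = 0 ∧ b = 0 ∧ c = 0 ∧ d = 0) ∨ (a = 1 ∧ b = 0 ∧ c = 0 ∧ d = 0) ∨
      (a = 0 ∧ b = 0 ∧ c = 1 ∧ d = 0) ∨ (a = 0 ∧ b = 0 ∧ c = 0 ∧ d = 1))) :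
    (![a, b, c, d] : Fin 4 → ℤ) ∉ S1 := by
  rw [mem_S1_iff]
  obtain ⟨e0, e1, e2, e3⟩ := vec_val a b c d
  rw [e0, e1, e2, e3]
  exact h

lemma mem_S2 {a b c d : ℤ}
    (h : (a = 0 ∧ b = 1 ∧ c = 0 ∧ d = 0) ∨ (a = 1 ∧ b = 0 ∧ c = 1 ∧ d = 0) ∨
      (a = 1 ∧ b = 0 ∧ c = 0 ∧ d = 1) ∨ (a = 0 ∧ b = 0 ∧ c = 1 ∧ d = 1)) :
    (![a, b, c, d] : Fin 4 → ℤ) ∈ S2 := by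
  rw [mem_S2_iff]
  obtain ⟨e0, e1, e2, e3⟩ := vec_val a b c d
  rw [e0, e1, e2, e3]
  exact h

end WeightLevelsD4

namespace WeightLevelsD4


set_option maxHeartbeats 1000000 in
lemma step {l : Fin 4 → ℤ} (hl : dominant l) (h1 : l ∉ S1) :
    ∃ ν, dominant ν ∧ prec ν l ∧ (l ∉ S2 → ν ∉ S1) := by
  have d0 := hl 0; have d1 := hl 1; have d2 := hl 2; have d3 := hl 3
  rw [mem_S1_iff] at h1
  by_cases hb : 1 ≤ l 1
  · by_cases hsp : (l 0 = 0 ∧ l 1 = 1 ∧ l 2 = 0 ∧ l 3 = 0) ∨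
        (l 0 = 1 ∧ l 1 = 1 ∧ l 2 = 0 ∧ l 3 = 0) ∨
        (l 0 = 0 ∧ l 1 = 1 ∧ l 2 = 1 ∧ l 3 = 0) ∨
        (l 0 = 0 ∧ l 1 = 1 ∧ l 2 = 0 ∧ l 3 = 1)
    · clear h1
      rcases hsp with h | h | h | h <;> obtain ⟨e0, e1, e2, e3⟩ := h
      · -- l = ω₂ ∈ S2 : predecessor 0
        exact ⟨![0, 0, 0, 0], dominant_mk le_rfl le_rfl le_rfl le_rfl,
          prec_mk' l 0 0 0 0 1 2 1 1 (by omega) (by omega) (by omega) (by omega) (by omega),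
          fun hns _ => hns (mem_S2_iff.mpr (Or.inl ⟨e0, e1, e2, e3⟩))⟩
      · -- l = ω₁+ω₂ : ν = ω₃+ω₄ via α₁+α₂
        exact ⟨![0, 0, 1, 1], dominant_mk le_rfl le_rfl zero_le_one zero_le_one,
          prec_mk' l 0 0 1 1 1 1 0 0 (by omega) (by omega) (by omega) (by omega) (by omega),
          fun _ => not_mem_S1 (by omega)⟩
      · -- l = ω₂+ω₃ : ν = ω₁+ω₄ via α₂+α₃
        exact ⟨![1, 0, 0, 1], dominant_mk zero_le_one le_rfl le_rfl zero_le_one,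
          prec_mk' l 1 0 0 1 0 1 1 0 (by omega) (by omega) (by omega) (by omega) (by omega),
          fun _ => not_mem_S1 (by omega)⟩
      · -- l = ω₂+ω₄ : ν = ω₁+ω₃ via α₂+α₄
        exact ⟨![1, 0, 1, 0], dominant_mk zero_le_one le_rfl zero_le_one le_rfl,
          prec_mk' l 1 0 1 0 0 1 0 1 (by omega) (by omega) (by omega) (by omega) (by omega),
          fun _ => not_mem_S1 (by omega)⟩
    · -- subtract the highest root θ = ω₂
      clear h1
      exact ⟨![l 0, l 1 - 1, l 2, l 3], dominant_mk d0 (by omega) d2 d3,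
        prec_mk' l _ _ _ _ 1 2 1 1 (by omega) (by omega) (by omega) (by omega) (by omega),
        fun _ => not_mem_S1 (by omega)⟩
  · have hb0 : l 1 = 0 := by omega
    by_cases h0 : 2 ≤ l 0
    · clear h1
      exact ⟨![l 0 - 2, 1, l 2, l 3], dominant_mk (by omega) zero_le_one d2 d3,
        prec_mk' l _ _ _ _ 1 0 0 0 (by omega) (by omega) (by omega) (by omega) (by omega),
        fun _ => not_mem_S1 (by omega)⟩
    by_cases h2 : 2 ≤ l 2
    · clear h1
      exact ⟨![l 0, 1, l 2 - 2, l 3], dominant_mk d0 zero_le_one (by omega) d3,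
        prec_mk' l _ _ _ _ 0 0 1 0 (by omega) (by omega) (by omega) (by omega) (by omega),
        fun _ => not_mem_S1 (by omega)⟩
    by_cases h3 : 2 ≤ l 3
    · clear h1
      exact ⟨![l 0, 1, l 2, l 3 - 2], dominant_mk d0 zero_le_one d2 (by omega),
        prec_mk' l _ _ _ _ 0 0 0 1 (by omega) (by omega) (by omega) (by omega) (by omega),
        fun _ => not_mem_S1 (by omega)⟩
    have hc : (l 0 = 1 ∧ l 2 = 1 ∧ l 3 = 0) ∨ (l 0 = 1 ∧ l 2 = 0 ∧ l 3 = 1) ∨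
        (l 0 = 0 ∧ l 2 = 1 ∧ l 3 = 1) ∨ (l 0 = 1 ∧ l 2 = 1 ∧ l 3 = 1) := by omega
    clear h1
    rcases hc with h | h | h | h <;> obtain ⟨e0, e2, e3⟩ := h
    · -- l = ω₁+ω₃ ∈ S2 : ν = ω₄ via α₁+α₂+α₃
      exact ⟨![0, 0, 0, 1], dominant_mk le_rfl le_rfl le_rfl zero_le_one,
        prec_mk' l 0 0 0 1 1 1 1 0 (by omega) (by omega) (by omega) (by omega) (by omega),
        fun hns _ => hns (mem_S2_iff.mpr (Or.inr (Or.inl ⟨e0, hb0, e2, e3⟩)))⟩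
    · -- l = ω₁+ω₄ ∈ S2 : ν = ω₃ via α₁+α₂+α₄
      exact ⟨![0, 0, 1, 0], dominant_mk le_rfl le_rfl zero_le_one le_rfl,
        prec_mk' l 0 0 1 0 1 1 0 1 (by omega) (by omega) (by omega) (by omega) (by omega),
        fun hns _ => hns (mem_S2_iff.mpr (Or.inr (Or.inr (Or.inl ⟨e0, hb0, e2, e3⟩))))⟩
    · -- l = ω₃+ω₄ ∈ S2 : ν = ω₁ via α₂+α₃+α₄
      exact ⟨![1, 0, 0, 0], dominant_mk zero_le_one le_rfl le_rfl le_rfl,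
        prec_mk' l 1 0 0 0 0 1 1 1 (by omega) (by omega) (by omega) (by omega) (by omega),
        fun hns _ => hns (mem_S2_iff.mpr (Or.inr (Or.inr (Or.inr ⟨e0, hb0, e2, e3⟩))))⟩
    · -- l = ω₁+ω₃+ω₄ : ν = 2ω₄ via α₁+α₂+α₃
      exact ⟨![0, 0, 0, 2], dominant_mk le_rfl le_rfl le_rfl zero_le_two,
        prec_mk' l 0 0 0 2 1 1 1 0 (by omega) (by omega) (by omega) (by omega) (by omega),
        fun _ => not_mem_S1 (by omega)⟩


set_option maxHeartbeats 1000000 in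
lemma no_pred_S1 {l ν : Fin 4 → ℤ} (hl : l ∈ S1) (hν : dominant ν) (hp : prec ν l) : False := by
  rw [prec_iff] at hp
  obtain ⟨hne, c, h0, h1, h2, h3⟩ := hp
  rw [Ne, eq4] at hne
  have d0 := hν 0; have d1 := hν 1; have d2 := hν 2; have d3 := hν 3
  rw [mem_S1_iff] at hl
  rcases hl with h | h | h | h <;> obtain ⟨e0, e1, e2, e3⟩ := h <;> omega

set_option maxHeartbeats 1000000 in
lemma pred_S2 {l ν : Fin 4 → ℤ} (hl : l ∈ S2) (hν : dominant ν) (hp : prec ν l) : ν ∈ S1 := by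
  rw [prec_iff] at hp
  obtain ⟨hne, c, h0, h1, h2, h3⟩ := hp
  rw [Ne, eq4] at hne
  have d0 := hν 0; have d1 := hν 1; have d2 := hν 2; have d3 := hν 3
  rw [mem_S2_iff] at hl
  rw [mem_S1_iff]
  rcases hl with h | h | h | h <;> obtain ⟨e0, e1, e2, e3⟩ := h <;> omega

lemma S1_dominant {l : Fin 4 → ℤ} (hl : l ∈ S1) : dominant l := by
  rw [mem_S1_iff] at hl
  intro i
  have h : 0 ≤ l 0 ∧ 0 ≤ l 1 ∧ 0 ≤ l 2 ∧ 0 ≤ l 3 := by omega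
  fin_cases i
  exacts [h.1, h.2.1, h.2.2.1, h.2.2.2]

lemma S2_dominant {l : Fin 4 → ℤ} (hl : l ∈ S2) : dominant l := by
  rw [mem_S2_iff] at hl
  intro i
  have h : 0 ≤ l 0 ∧ 0 ≤ l 1 ∧ 0 ≤ l 2 ∧ 0 ≤ l 3 := by omega
  fin_cases i
  exacts [h.1, h.2.1, h.2.2.1, h.2.2.2]

lemma level1_eq : level 1 = S1 := by
  ext l
  show (dominant l ∧ l ∉ cum 0 ∧ ∀ ν, dominant ν → prec ν l → ν ∈ cum 0) ↔ _
  constructor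
  · rintro ⟨hd, -, hall⟩
    by_contra hn
    obtain ⟨ν, hνd, hνp, -⟩ := step hd hn
    exact hall ν hνd hνp
  · intro hl
    exact ⟨S1_dominant hl, fun h => h.elim,
      fun ν hνd hνp => absurd (no_pred_S1 hl hνd hνp) not_false⟩

lemma cum1_eq : cum 1 = S1 := by
  have h : cum 1 = cum 0 ∪
      {l | dominant l ∧ l ∉ cum 0 ∧ ∀ ν, dominant ν → prec ν l → ν ∈ cum 0} := rfl
  rw [h, show cum 0 = ∅ from rfl, Set.empty_union, ← level1_eq]
  rfl

lemma level2_eq : level 2 = S2 := by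
  ext l
  show (dominant l ∧ l ∉ cum 1 ∧ ∀ ν, dominant ν → prec ν l → ν ∈ cum 1) ↔ _
  rw [cum1_eq]
  constructor
  · rintro ⟨hd, h1, hall⟩
    by_contra h2
    obtain ⟨ν, hνd, hνp, hν1⟩ := step hd h1
    exact hν1 h2 (hall ν hνd hνp)
  · intro hl
    refine ⟨S2_dominant hl, ?_, fun ν hνd hνp => pred_S2 hl hνd hνp⟩
    rw [mem_S1_iff]
    rw [mem_S2_iff] at hl
    omega

/-- **Lemma 5.2, row `D₄`.** In type `D₄`:
`Λ₁ = {0, ω₁, ω₃, ω₄}` and `Λ₂ = {ω₂, ω₁ + ω₃, ω₁ + ω₄, ω₃ + ω₄}`. -/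
theorem levels_D4 :
    level 1 = {0, ![1, 0, 0, 0], ![0, 0, 1, 0], ![0, 0, 0, 1]} ∧
    level 2 = {![0, 1, 0, 0], ![1, 0, 1, 0], ![1, 0, 0, 1], ![0, 0, 1, 1]} := by
  exact ⟨level1_eq, level2_eq⟩

end WeightLevelsD4
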